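/- Let X and Y be real normed vector spaces with X infinite-dimensional, let T : X → Y be a bounded linear operator, and let E be a dense linear subspace of X. Then ∇(T|_E) = ∇(T), where ∇(T|_E) is computed with E in place of X; i.e., the quantity ∇ is densely invariant for bounded operators. -/

import Mathlib

/-- `inf_{m ∈ S_M} ‖Tm‖`, the infimum of `‖Tm‖` over the unit sphere of a subspace `M`. -/
noncomputable def sphereInf {X Y : Type*} [NormedAddCommGroup X] [NormedSpace ℝ X]
    [NormedAddCommGroup Y] [NormedSpace ℝ Y] (T : X →L[ℝ] Y) (M : Submodule ℝ X) : ℝ :=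
  sInf {s : ℝ | ∃ m : X, m ∈ M ∧ ‖m‖ = 1 ∧ s = ‖T m‖}

/-- `τ(T) = sup_{M ∈ I(X)} inf_{m ∈ S_M} ‖Tm‖`. -/
noncomputable def opTau {X Y : Type*} [NormedAddCommGroup X] [NormedSpace ℝ X]
    [NormedAddCommGroup Y] [NormedSpace ℝ Y] (T : X →L[ℝ] Y) : ℝ :=
  sSup {r : ℝ | ∃ M : Submodule ℝ X, ¬ FiniteDimensional ℝ M ∧ r = sphereInf T M}

/-- `∇(T) = inf_{M ∈ I(X)} τ(T|_M)`. -/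
noncomputable def opNabla {X Y : Type*} [NormedAddCommGroup X] [NormedSpace ℝ X]
    [NormedAddCommGroup Y] [NormedSpace ℝ Y] (T : X →L[ℝ] Y) : ℝ :=
  sInf {r : ℝ | ∃ M : Submodule ℝ X, ¬ FiniteDimensional ℝ M ∧
    r = opTau (T.comp M.subtypeL)}

section Helpers

variable {X Y : Type*} [NormedAddCommGroup X] [NormedSpace ℝ X]
  [NormedAddCommGroup Y] [NormedSpace ℝ Y]

lemma sphereSet_nonneg (T : X →L[ℝ] Y) (M : Submodule ℝ X) :
    ∀ s ∈ {s : ℝ | ∃ m : X, m ∈ M ∧ ‖m‖ = 1 ∧ s = ‖T m‖}, 0 ≤ s := by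
  rintro s ⟨m, -, -, rfl⟩; positivity

lemma sphereInf_nonneg (T : X →L[ℝ] Y) (M : Submodule ℝ X) : 0 ≤ sphereInf T M :=
  Real.sInf_nonneg (sphereSet_nonneg T M)

lemma exists_norm_one_mem {M : Submodule ℝ X} (h : M ≠ ⊥) : ∃ m : X, m ∈ M ∧ ‖m‖ = 1 := by
  obtain ⟨m, hm, hm0⟩ := Submodule.exists_mem_ne_zero_of_ne_bot h
  refine ⟨‖m‖⁻¹ • m, M.smul_mem _ hm, ?_⟩
  rw [norm_smul, norm_inv, norm_norm, inv_mul_cancel₀ (norm_ne_zero_iff.2 hm0)]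

lemma ne_bot_of_infDim {M : Submodule ℝ X} (h : ¬ FiniteDimensional ℝ M) : M ≠ ⊥ := by
  rintro rfl; exact h inferInstance

lemma sphereInf_le_norm (T : X →L[ℝ] Y) {M : Submodule ℝ X} (h : M ≠ ⊥) :
    sphereInf T M ≤ ‖T‖ := by
  obtain ⟨m, hm, hm1⟩ := exists_norm_one_mem h
  have h2 : ‖T m‖ ≤ ‖T‖ := by simpa [hm1] using T.le_opNorm m
  exact le_trans (csInf_le ⟨0, fun s hs => sphereSet_nonneg T M s hs⟩ ⟨m, hm, hm1, rfl⟩) h2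

lemma tauSet_bddAbove (T : X →L[ℝ] Y) :
    BddAbove {r : ℝ | ∃ M : Submodule ℝ X, ¬ FiniteDimensional ℝ M ∧ r = sphereInf T M} := by
  refine ⟨‖T‖, ?_⟩; rintro r ⟨M, hM, rfl⟩
  exact sphereInf_le_norm T (ne_bot_of_infDim hM)

lemma notFinDim_top (hX : ¬ FiniteDimensional ℝ X) :
    ¬ FiniteDimensional ℝ (⊤ : Submodule ℝ X) := fun h =>
  hX ((Submodule.topEquiv (R := ℝ) (M := X)).finiteDimensional)

lemma tauSet_nonempty (T : X →L[ℝ] Y) (hX : ¬ FiniteDimensional ℝ X) :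
    Set.Nonempty {r : ℝ | ∃ M : Submodule ℝ X, ¬ FiniteDimensional ℝ M ∧ r = sphereInf T M} :=
  ⟨sphereInf T ⊤, ⊤, notFinDim_top hX, rfl⟩

lemma opTau_nonneg (T : X →L[ℝ] Y) (hX : ¬ FiniteDimensional ℝ X) : 0 ≤ opTau T :=
  le_trans (sphereInf_nonneg T ⊤) (le_csSup (tauSet_bddAbove T) ⟨⊤, notFinDim_top hX, rfl⟩)

lemma notFinDim_map {Z₁ Z₂ : Type*} [AddCommGroup Z₁] [Module ℝ Z₁] [AddCommGroup Z₂]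
    [Module ℝ Z₂] (J : Z₁ →ₗ[ℝ] Z₂) (hJ : Function.Injective J) {W : Submodule ℝ Z₁}
    (h : ¬ FiniteDimensional ℝ W) : ¬ FiniteDimensional ℝ (W.map J) := by
  intro hf
  exact h ((W.equivMapOfInjective J hJ).symm.finiteDimensional)

lemma sphereInf_restrict (T : X →L[ℝ] Y) (P : Submodule ℝ X) (W : Submodule ℝ P) :
    sphereInf (T.comp P.subtypeL) W = sphereInf T (W.map P.subtype) := by
  unfold sphereInf
  congr 1
  ext s
  constructor
  · rintro ⟨m, hm, hm1, rfl⟩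
    exact ⟨↑m, Submodule.mem_map_of_mem hm, by simpa using hm1, by simp⟩
  · rintro ⟨m', ⟨m, hm, rfl⟩, hm1, rfl⟩
    exact ⟨m, hm, by simpa using hm1, by simp⟩

lemma opTau_le_opTau {Z₁ Z₂ : Type*} [NormedAddCommGroup Z₁] [NormedSpace ℝ Z₁]
    [NormedAddCommGroup Z₂] [NormedSpace ℝ Z₂] (T₁ : Z₁ →L[ℝ] Y) (T₂ : Z₂ →L[ℝ] Y)
    (J : Z₁ →ₗ[ℝ] Z₂) (hJn : ∀ v, ‖J v‖ = ‖v‖) (hJT : ∀ v, T₂ (J v) = T₁ v)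
    (h1 : ¬ FiniteDimensional ℝ Z₁) : opTau T₁ ≤ opTau T₂ := by
  have hJinj : Function.Injective J := by
    intro a b hab
    have h0 : ‖J (a - b)‖ = 0 := by rw [map_sub, hab]; simp
    rw [hJn] at h0
    exact sub_eq_zero.1 (norm_eq_zero.1 h0)
  apply csSup_le_csSup (tauSet_bddAbove T₂) (tauSet_nonempty T₁ h1)
  rintro r ⟨W, hW, rfl⟩
  refine ⟨W.map J, notFinDim_map J hJinj hW, ?_⟩
  unfold sphereInf
  congr 1
  ext s
  constructor
  · rintro ⟨m, hm, hm1, rfl⟩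
    exact ⟨J m, Submodule.mem_map_of_mem hm, by rw [hJn]; exact hm1, by rw [hJT]⟩
  · rintro ⟨m', ⟨m, hm, rfl⟩, hm1, rfl⟩
    exact ⟨m, hm, by rw [← hJn]; exact hm1, by rw [hJT]⟩

lemma opTau_congr {Z₁ Z₂ : Type*} [NormedAddCommGroup Z₁] [NormedSpace ℝ Z₁]
    [NormedAddCommGroup Z₂] [NormedSpace ℝ Z₂] (T₁ : Z₁ →L[ℝ] Y) (T₂ : Z₂ →L[ℝ] Y)
    (e : Z₁ ≃ₗ[ℝ] Z₂) (hn : ∀ v, ‖e v‖ = ‖v‖) (hT : ∀ v, T₂ (e v) = T₁ v)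
    (h1 : ¬ FiniteDimensional ℝ Z₁) : opTau T₁ = opTau T₂ := by
  have h2 : ¬ FiniteDimensional ℝ Z₂ := fun h => h1 (e.symm.finiteDimensional)
  apply le_antisymm
  · exact opTau_le_opTau T₁ T₂ e.toLinearMap hn hT h1
  · refine opTau_le_opTau T₂ T₁ e.symm.toLinearMap (fun v => ?_) (fun v => ?_) h2
    · simpa using (hn (e.symm v)).symm
    · simpa using (hT (e.symm v)).symm

end Helpers
section Bio

variable {X : Type*} [NormedAddCommGroup X] [NormedSpace ℝ X]

lemma exists_biorthogonal (M : Submodule ℝ X) (hM : ¬ FiniteDimensional ℝ M) :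
    ∃ (x : ℕ → X) (f : ℕ → X →L[ℝ] ℝ), (∀ n, x n ∈ M) ∧ (∀ n, ‖x n‖ = 1) ∧
      (∀ n m, f n (x m) = if n = m then 1 else 0) := by
  classical
  have step : ∀ (n : ℕ) (p : ∀ m, m < n → X × (X →L[ℝ] ℝ)),
      ((∀ m hm, (p m hm).1 ∈ M) ∧ (∀ m hm, ‖(p m hm).1‖ = 1) ∧
       (∀ m hm k hk, (p m hm).2 (p k hk).1 = if m = k then 1 else 0)) →
      ∃ q : X × (X →L[ℝ] ℝ), q.1 ∈ M ∧ ‖q.1‖ = 1 ∧ q.2 q.1 = 1 ∧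
        ∀ m hm, ((p m hm).2 q.1 = 0 ∧ q.2 (p m hm).1 = 0) := by
    rintro n p ⟨hmem, hunit, hbi⟩
    -- find a unit vector of M killed by the previous functionals
    obtain ⟨x0, hx0M, hx0ker, hx0ne⟩ :
        ∃ x0 : X, x0 ∈ M ∧ (∀ m hm, (p m hm).2 x0 = 0) ∧ x0 ≠ 0 := by
      by_contra hcon
      push_neg at hcon
      apply hM
      let φ : M →ₗ[ℝ] (Fin n → ℝ) :=
        { toFun := fun v i => (p i.1 i.2).2 v
          map_add' := by intros; ext i; simp
          map_smul' := by intros; ext i; simp }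
      have hker : LinearMap.ker φ = ⊥ := by
        apply (Submodule.eq_bot_iff _).2
        rintro ⟨v, hv⟩ hk
        have hall : ∀ m hm, (p m hm).2 v = 0 := by
          intro m hm
          have := congrFun (LinearMap.mem_ker.1 hk) ⟨m, hm⟩
          simpa [φ] using this
        exact Subtype.ext (hcon v hv hall)
      exact FiniteDimensional.of_injective φ (LinearMap.ker_eq_bot.1 hker)
    set x : X := ‖x0‖⁻¹ • x0 with hxdef
    have hxM : x ∈ M := M.smul_mem _ hx0M
    have hxu : ‖x‖ = 1 := by
      rw [hxdef, norm_smul, norm_inv, norm_norm,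
        inv_mul_cancel₀ (norm_ne_zero_iff.2 hx0ne)]
    have hxne : x ≠ 0 := by intro h; rw [h] at hxu; simp at hxu
    have hxker : ∀ m hm, (p m hm).2 x = 0 := by
      intro m hm; rw [hxdef, map_smul, hx0ker m hm]; simp
    -- linear independence of the previous vectors together with x
    set v : Fin (n + 1) → X := Fin.snoc (fun i : Fin n => (p i.1 i.2).1) x with hvdef
    have hli : LinearIndependent ℝ v := by
      rw [Fintype.linearIndependent_iff]
      intro g hg
      have hcast : ∀ j : Fin n, g j.castSucc = 0 := by
        intro j
        have h2 := congrArg ((p j.1 j.2).2) hg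
        rw [map_sum, map_zero] at h2
        simp only [map_smul, smul_eq_mul] at h2
        rw [Fin.sum_univ_castSucc] at h2
        simp only [hvdef, Fin.snoc_castSucc, Fin.snoc_last, hxker j.1 j.2, mul_zero,
          add_zero, hbi] at h2
        rw [Finset.sum_eq_single j] at h2
        · simpa using h2
        · intro k _ hk
          have : (j : ℕ) ≠ (k : ℕ) := fun hc => hk (Fin.ext hc).symm
          simp [this]
        · intro hj; exact absurd (Finset.mem_univ j) hj
      have hlast : g (Fin.last n) = 0 := by
        rw [Fin.sum_univ_castSucc] at hg
        simp only [hcast, zero_smul, Finset.sum_const_zero, zero_add] at hg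
        rw [hvdef] at hg
        simp only [Fin.snoc_last] at hg
        rcases smul_eq_zero.1 hg with h | h
        · exact h
        · exact absurd h hxne
      intro i
      refine Fin.lastCases ?_ ?_ i
      · exact hlast
      · exact hcast
    -- build the new functional via Hahn-Banach
    set F := Submodule.span ℝ (Set.range v) with hFdef
    haveI : FiniteDimensional ℝ F := FiniteDimensional.span_of_finite ℝ (Set.finite_range v)
    let b : Module.Basis (Fin (n + 1)) ℝ F := Module.Basis.span hli
    let c : F →L[ℝ] ℝ := LinearMap.toContinuousLinearMap (b.coord (Fin.last n))
    obtain ⟨g, hg, -⟩ := exists_extension_norm_eq F c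
    have hgv : ∀ i, g (v i) = if i = Fin.last n then 1 else 0 := by
      intro i
      have hmemF : v i ∈ F := Submodule.subset_span (Set.mem_range_self i)
      have hbi' : (⟨v i, hmemF⟩ : F) = b i := by
        apply Subtype.ext; rw [Module.Basis.span_apply]
      have h3 := hg ⟨v i, hmemF⟩
      rw [hbi'] at h3
      rw [show ((b i : F) : X) = v i from by rw [Module.Basis.span_apply]] at h3
      rw [h3]
      simp only [c, LinearMap.coe_toContinuousLinearMap', Module.Basis.coord_apply, Module.Basis.repr_self]
      rw [Finsupp.single_apply]
    refine ⟨(x, g), hxM, hxu, ?_, ?_⟩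
    · have h4 := hgv (Fin.last n)
      rw [if_pos rfl, hvdef, Fin.snoc_last] at h4
      exact h4
    · intro m hm
      refine ⟨hxker m hm, ?_⟩
      have h4 := hgv (Fin.castSucc ⟨m, hm⟩)
      rw [if_neg (Fin.ne_last_of_lt (Fin.castSucc_lt_last ⟨m, hm⟩)), hvdef,
        Fin.snoc_castSucc] at h4
      exact h4
  -- totalized recursion
  let stepFun : ∀ n, (∀ m, m < n → X × (X →L[ℝ] ℝ)) → X × (X →L[ℝ] ℝ) := fun n p =>
    if h : ((∀ m hm, (p m hm).1 ∈ M) ∧ (∀ m hm, ‖(p m hm).1‖ = 1) ∧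
        (∀ m hm k hk, (p m hm).2 (p k hk).1 = if m = k then 1 else 0)) then
      Classical.choose (step n p h)
    else (0, 0)
  let s : ℕ → X × (X →L[ℝ] ℝ) := fun n => Nat.strongRec stepFun n
  have hs : ∀ n, s n = stepFun n (fun m _ => s m) := fun n => Nat.strongRec_eq stepFun n
  have good : ∀ n, (s n).1 ∈ M ∧ ‖(s n).1‖ = 1 ∧ (s n).2 (s n).1 = 1 ∧
      ∀ m, m < n → ((s m).2 (s n).1 = 0 ∧ (s n).2 (s m).1 = 0) := by
    intro n
    induction n using Nat.strong_induction_on with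
    | _ n ih =>
      have hinv : ((∀ m (hm : m < n), (s m).1 ∈ M) ∧ (∀ m (hm : m < n), ‖(s m).1‖ = 1) ∧
          (∀ m (hm : m < n) k (hk : k < n), (s m).2 (s k).1 = if m = k then 1 else 0)) := by
        refine ⟨fun m hm => (ih m hm).1, fun m hm => (ih m hm).2.1, ?_⟩
        intro m hm k hk
        rcases lt_trichotomy m k with h | h | h
        · rw [if_neg h.ne]; exact ((ih k hk).2.2.2 m h).1
        · subst h; rw [if_pos rfl]; exact (ih m hm).2.2.1
        · rw [if_neg (Nat.ne_of_gt h)]; exact ((ih m hm).2.2.2 k h).2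
      have hspec := Classical.choose_spec (step n (fun m _ => s m) hinv)
      have hsn : s n = Classical.choose (step n (fun m _ => s m) hinv) := by
        rw [hs n]
        exact dif_pos hinv
      rw [hsn]
      exact ⟨hspec.1, hspec.2.1, hspec.2.2.1, fun m hm => hspec.2.2.2 m hm⟩
  refine ⟨fun n => (s n).1, fun n => (s n).2, fun n => (good n).1, fun n => (good n).2.1, ?_⟩
  intro n m
  rcases lt_trichotomy n m with h | h | h
  · rw [if_neg h.ne]; exact ((good m).2.2.2 n h).1
  · subst h; rw [if_pos rfl]; exact (good n).2.2.1
  · rw [if_neg (Nat.ne_of_gt h)]; exact ((good n).2.2.2 m h).2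

end Bio
section Pert

variable {X Y : Type*} [NormedAddCommGroup X] [NormedSpace ℝ X]
  [NormedAddCommGroup Y] [NormedSpace ℝ Y]

lemma pert (T : X →L[ℝ] Y) {M E : Submodule ℝ X}
    (hM : ¬ FiniteDimensional ℝ M) (hE : Dense (E : Set X)) {ε : ℝ} (hε : 0 < ε) :
    ∃ N : Submodule ℝ X, N ≤ E ∧ ¬ FiniteDimensional ℝ N ∧
      opTau (T.comp N.subtypeL) ≤ opTau (T.comp M.subtypeL) + ε := by
  classical
  obtain ⟨x, f, hxM, hxu, hbi⟩ := exists_biorthogonal M hM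
  set ε' : ℝ := min 4⁻¹ (ε / (2 * (‖T‖ + 1))) with hε'def
  have hε'pos : 0 < ε' := lt_min (by norm_num) (div_pos hε (by positivity))
  have hε'le : ε' ≤ 4⁻¹ := min_le_left _ _
  have hTε' : 2 * ‖T‖ * ε' ≤ ε := by
    have h1 : ε' ≤ ε / (2 * (‖T‖ + 1)) := min_le_right _ _
    have h2 : (0:ℝ) < 2 * (‖T‖ + 1) := by positivity
    have h3 : 2 * (‖T‖ + 1) * ε' ≤ ε := by
      rw [← le_div_iff₀' h2]; exact h1
    nlinarith [norm_nonneg T, hε'pos.le]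
  -- choose approximating vectors in E
  have hchoice : ∀ n : ℕ, ∃ en : X, en ∈ E ∧ ‖x n - en‖ ≤ ε' / 2 / 2 ^ n / (1 + ‖f n‖) := by
    intro n
    have hd : (x n) ∈ closure (E : Set X) := hE _
    have hfn : (0:ℝ) < 1 + ‖f n‖ := by positivity
    have hpos : 0 < ε' / 2 / 2 ^ n / (1 + ‖f n‖) := by positivity
    obtain ⟨en, henE, hen⟩ := Metric.mem_closure_iff.1 hd _ hpos
    exact ⟨en, henE, by rw [← dist_eq_norm]; exact hen.le⟩
  choose e heE hee using hchoice
  -- x is linearly independent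
  have hxne : ∀ n, x n ≠ 0 := fun n h => by
    have := hxu n; rw [h] at this; simp at this
  have hxli : LinearIndependent ℝ x := by
    rw [linearIndependent_iff']
    intro t g hg i hi
    have h2 := congrArg (f i) hg
    rw [map_sum, map_zero] at h2
    simp only [map_smul, smul_eq_mul, hbi, mul_ite, mul_one, mul_zero] at h2
    rw [Finset.sum_ite_eq t i g, if_pos hi] at h2
    exact h2
  set Mx := Submodule.span ℝ (Set.range x) with hMxdef
  have hMxM : Mx ≤ M := Submodule.span_le.2 (by rintro _ ⟨n, rfl⟩; exact hxM n)
  let b : Module.Basis ℕ ℝ Mx := Module.Basis.span hxli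
  set Φ : Mx →ₗ[ℝ] X := b.constr ℝ e with hΦdef
  -- coefficients are given by the functionals
  have hcoeff : ∀ (w : Mx) (c : ℕ →₀ ℝ), (c.sum fun i a => a • x i) = (w : X) →
      ∀ i, c i = f i (w : X) := by
    intro w c hc i
    rw [← hc, map_finsuppSum]
    simp only [map_smul, smul_eq_mul, hbi, mul_ite, mul_one, mul_zero]
    rw [Finsupp.sum_ite_eq c i fun _ a => a]
    split_ifs with h
    · rfl
    · exact Finsupp.notMem_support_iff.1 h
  have hΦw : ∀ (w : Mx) (c : ℕ →₀ ℝ), (c.sum fun i a => a • x i) = (w : X) →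
      Φ w = c.sum fun i a => a • e i := by
    intro w c hc
    have hw : w = c.sum fun i a => a • (b i) := by
      apply Subtype.ext
      push_cast [Finsupp.sum]
      rw [← hc, Finsupp.sum]
      congr 1
      ext i
      rw [show ((b i : Mx) : X) = x i from congrArg Subtype.val (Module.Basis.span_apply hxli i)]
    rw [hw, map_finsuppSum]
    simp only [map_smul, hΦdef, Module.Basis.constr_basis]
  -- the key estimate
  have hgeom : ∀ s : Finset ℕ, ∑ i ∈ s, (ε' / 2 / 2 ^ i) ≤ ε' := by
    intro s
    have hsum : Summable (fun i : ℕ => ε' / 2 / 2 ^ i) := by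
      have := (summable_geometric_two).mul_left (ε' / 2)
      refine this.congr fun i => ?_
      field_simp
      rw [← mul_pow]; norm_num
    calc ∑ i ∈ s, (ε' / 2 / 2 ^ i) ≤ ∑' i : ℕ, (ε' / 2 / 2 ^ i) :=
          hsum.sum_le_tsum s (fun i _ => by positivity)
    _ = ε' := tsum_geometric_two' ε'
  have hest : ∀ w : Mx, ‖Φ w - (w : X)‖ ≤ ε' * ‖w‖ := by
    intro w
    have hwmem : (w : X) ∈ Submodule.span ℝ (Set.range x) := w.2
    obtain ⟨c, hc⟩ := Finsupp.mem_span_range_iff_exists_finsupp.1 hwmem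
    rw [hΦw w c hc, ← hc]
    rw [Finsupp.sum, Finsupp.sum, ← Finset.sum_sub_distrib]
    refine le_trans (norm_sum_le _ _) ?_
    have hterm : ∀ i ∈ c.support, ‖c i • e i - c i • x i‖ ≤ ‖w‖ * (ε' / 2 / 2 ^ i) := by
      intro i _
      rw [← smul_sub, norm_smul, Real.norm_eq_abs]
      have h1 : |c i| ≤ ‖f i‖ * ‖w‖ := by
        rw [hcoeff w c hc i]
        calc |f i (w : X)| ≤ ‖f i‖ * ‖(w : X)‖ := (f i).le_opNorm _
        _ = ‖f i‖ * ‖w‖ := rfl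
      have h2 : ‖e i - x i‖ ≤ ε' / 2 / 2 ^ i / (1 + ‖f i‖) := by
        rw [norm_sub_rev]; exact hee i
      have hfn : (0:ℝ) < 1 + ‖f i‖ := by positivity
      calc |c i| * ‖e i - x i‖ ≤ (‖f i‖ * ‖w‖) * (ε' / 2 / 2 ^ i / (1 + ‖f i‖)) := by
            apply mul_le_mul h1 h2 (norm_nonneg _) (by positivity)
      _ = ‖w‖ * (ε' / 2 / 2 ^ i) * (‖f i‖ / (1 + ‖f i‖)) := by ring
      _ ≤ ‖w‖ * (ε' / 2 / 2 ^ i) * 1 := by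
            apply mul_le_mul_of_nonneg_left _ (by positivity)
            rw [div_le_one hfn]; linarith
      _ = ‖w‖ * (ε' / 2 / 2 ^ i) := by ring
    calc ∑ i ∈ c.support, ‖c i • e i - c i • x i‖ ≤ ∑ i ∈ c.support, ‖w‖ * (ε' / 2 / 2 ^ i) :=
          Finset.sum_le_sum hterm
    _ = ‖w‖ * ∑ i ∈ c.support, (ε' / 2 / 2 ^ i) := by rw [Finset.mul_sum]
    _ ≤ ‖w‖ * ε' := mul_le_mul_of_nonneg_left (hgeom _) (norm_nonneg _)
    _ = ε' * ‖w‖ := by ring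
  -- Φ is bounded below, hence injective
  have hlow : ∀ w : Mx, (1 - ε') * ‖w‖ ≤ ‖Φ w‖ := by
    intro w
    have h2 : ‖(w : X)‖ = ‖w‖ := rfl
    have h3 := norm_sub_norm_le (w : X) (Φ w)
    rw [norm_sub_rev, h2] at h3
    linarith [hest w]
  have hΦinj : Function.Injective Φ := by
    rw [← LinearMap.ker_eq_bot]
    apply (Submodule.eq_bot_iff _).2
    intro w hw
    have h0 : ‖Φ w‖ = 0 := by rw [LinearMap.mem_ker.1 hw]; simp
    have := hlow w
    rw [h0] at this
    have hε'lt : (0:ℝ) < 1 - ε' := by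
      have : ε' ≤ 4⁻¹ := hε'le; linarith
    have : ‖w‖ ≤ 0 := by nlinarith [norm_nonneg w]
    exact norm_le_zero_iff.1 this
  set N := Submodule.span ℝ (Set.range e) with hNdef
  have hrange : LinearMap.range Φ = N := by rw [hΦdef, Module.Basis.constr_range]
  have hNE : N ≤ E := Submodule.span_le.2 (by rintro _ ⟨n, rfl⟩; exact heE n)
  have hMxinf : ¬ FiniteDimensional ℝ Mx := by
    intro h
    haveI := h
    haveI : Fintype ℕ := FiniteDimensional.fintypeBasisIndex b
    exact not_finite ℕ
  have hNinf : ¬ FiniteDimensional ℝ N := by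
    intro h
    apply hMxinf
    haveI : FiniteDimensional ℝ (LinearMap.range Φ) := by rw [hrange]; exact h
    exact (LinearEquiv.ofInjective Φ hΦinj).symm.finiteDimensional
  refine ⟨N, hNE, hNinf, ?_⟩
  apply csSup_le (tauSet_nonempty _ hNinf)
  rintro r ⟨V', hV', rfl⟩
  rw [sphereInf_restrict]
  set V := V'.map N.subtype with hVdef
  have hVN : V ≤ N := Submodule.map_subtype_le N V'
  have hVinf : ¬ FiniteDimensional ℝ V := notFinDim_map _ (Submodule.injective_subtype N) hV'
  set W : Submodule ℝ Mx := V.comap Φ with hWdef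
  have hWV : W.map Φ = V := by
    rw [hWdef, Submodule.map_comap_eq, hrange]
    exact inf_eq_right.2 hVN
  have hWinf : ¬ FiniteDimensional ℝ W := by
    intro h
    apply hVinf
    rw [← hWV]
    haveI := h
    exact Module.Finite.map W Φ
  set WX := W.map Mx.subtype with hWXdef
  have hWXM : WX ≤ M := le_trans (Submodule.map_subtype_le Mx W) hMxM
  have hWXinf : ¬ FiniteDimensional ℝ WX :=
    notFinDim_map _ (Submodule.injective_subtype Mx) hWinf
  set W' := WX.comap M.subtype with hW'def
  have hW'map : W'.map M.subtype = WX := by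
    rw [hW'def, Submodule.map_comap_subtype]
    exact inf_eq_right.2 hWXM
  have hW'inf : ¬ FiniteDimensional ℝ W' := by
    intro h
    apply hWXinf
    rw [← hW'map]
    haveI := h
    exact Module.Finite.map W' M.subtype
  have h1 : sphereInf T WX ≤ opTau (T.comp M.subtypeL) := by
    apply le_csSup (tauSet_bddAbove _)
    exact ⟨W', hW'inf, by rw [sphereInf_restrict, hW'map]⟩
  have hmain : sphereInf T V ≤ sphereInf T WX + ε := by
    have hWXne : {s : ℝ | ∃ m : X, m ∈ WX ∧ ‖m‖ = 1 ∧ s = ‖T m‖}.Nonempty := by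
      obtain ⟨m, hm, hm1⟩ := exists_norm_one_mem (ne_bot_of_infDim hWXinf)
      exact ⟨‖T m‖, m, hm, hm1, rfl⟩
    rw [← sub_le_iff_le_add]
    apply le_csInf hWXne
    rintro s ⟨w, hw, hw1, rfl⟩
    rw [sub_le_iff_le_add]
    -- w comes from Mx
    rw [hWXdef] at hw
    obtain ⟨wm, hwmW, rfl⟩ := hw
    set v0 := Φ wm with hv0def
    have hv0V : v0 ∈ V := by
      rw [← hWV]; exact Submodule.mem_map_of_mem hwmW
    have hwmnorm : ‖wm‖ = 1 := hw1
    have hest' : ‖v0 - (wm : X)‖ ≤ ε' := by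
      have := hest wm; rw [hwmnorm, mul_one] at this; exact this
    have hv0n : |‖v0‖ - 1| ≤ ε' := by
      have := abs_norm_sub_norm_le v0 (wm : X)
      have h2 : ‖(wm : X)‖ = 1 := hw1
      rw [h2] at this
      exact le_trans this hest'
    have hv0lb : 1 - ε' ≤ ‖v0‖ := by
      have := abs_le.1 hv0n; linarith [this.1]
    have hv0pos : 0 < ‖v0‖ := by
      have : ε' ≤ 4⁻¹ := hε'le; linarith
    set v : X := ‖v0‖⁻¹ • v0 with hvdef
    have hvV : v ∈ V := V.smul_mem _ hv0V
    have hv1 : ‖v‖ = 1 := by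
      rw [hvdef, norm_smul, norm_inv, norm_norm, inv_mul_cancel₀ hv0pos.ne']
    have hvv0 : ‖v - v0‖ ≤ ε' := by
      have : v - v0 = (‖v0‖⁻¹ - 1) • v0 := by rw [hvdef, sub_smul, one_smul]
      rw [this, norm_smul, Real.norm_eq_abs]
      have h2 : |‖v0‖⁻¹ - 1| * ‖v0‖ = |1 - ‖v0‖| := by
        rw [← abs_of_pos hv0pos, ← abs_mul]
        rw [abs_of_pos hv0pos]
        rw [sub_mul, inv_mul_cancel₀ hv0pos.ne', one_mul, abs_sub_comm]
      rw [h2, abs_sub_comm]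
      exact hv0n
    have hTv : ‖T v‖ ≤ ‖T (wm : X)‖ + ε := by
      have k1 : ‖T v - T v0‖ ≤ ‖T‖ * ε' := by
        rw [← map_sub]
        calc ‖T (v - v0)‖ ≤ ‖T‖ * ‖v - v0‖ := T.le_opNorm _
        _ ≤ ‖T‖ * ε' := mul_le_mul_of_nonneg_left hvv0 (norm_nonneg T)
      have k2 : ‖T v0 - T (wm : X)‖ ≤ ‖T‖ * ε' := by
        rw [← map_sub]
        calc ‖T (v0 - (wm:X))‖ ≤ ‖T‖ * ‖v0 - (wm:X)‖ := T.le_opNorm _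
        _ ≤ ‖T‖ * ε' := mul_le_mul_of_nonneg_left hest' (norm_nonneg T)
      calc ‖T v‖ = ‖(T v - T v0) + (T v0 - T (wm:X)) + T (wm:X)‖ := by
            rw [sub_add_sub_cancel, sub_add_cancel]
      _ ≤ ‖(T v - T v0) + (T v0 - T (wm:X))‖ + ‖T (wm:X)‖ := norm_add_le _ _
      _ ≤ ‖T v - T v0‖ + ‖T v0 - T (wm:X)‖ + ‖T (wm:X)‖ := by
            linarith [norm_add_le (T v - T v0) (T v0 - T (wm:X))]
      _ ≤ ‖T‖ * ε' + ‖T‖ * ε' + ‖T (wm:X)‖ := by linarith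
      _ ≤ ‖T (wm:X)‖ + ε := by linarith [hTε']
    have hvmem : ‖T v‖ ∈ {s : ℝ | ∃ m : X, m ∈ V ∧ ‖m‖ = 1 ∧ s = ‖T m‖} := ⟨v, hvV, hv1, rfl⟩
    exact le_trans (csInf_le ⟨0, fun s hs => sphereSet_nonneg T V s hs⟩ hvmem) hTv
  linarith [hmain, h1]

end Pert
section MainAux

variable {X Y : Type*} [NormedAddCommGroup X] [NormedSpace ℝ X]
  [NormedAddCommGroup Y] [NormedSpace ℝ Y]

lemma nablaSet_bddBelow (T : X →L[ℝ] Y) :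
    BddBelow {r : ℝ | ∃ M : Submodule ℝ X, ¬ FiniteDimensional ℝ M ∧
      r = opTau (T.comp M.subtypeL)} := by
  refine ⟨0, ?_⟩
  rintro r ⟨M, hM, rfl⟩
  exact opTau_nonneg _ hM

end MainAux

/-- `∇` is densely invariant: `∇(T|_E) = ∇(T)` for any dense subspace `E`. -/
theorem nabla_densely_invariant {X Y : Type*} [NormedAddCommGroup X] [NormedSpace ℝ X]
    [NormedAddCommGroup Y] [NormedSpace ℝ Y] (hX : ¬ FiniteDimensional ℝ X)
    (T : X →L[ℝ] Y) (E : Submodule ℝ X) (hE : Dense (E : Set X)) :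
    opNabla (T.comp E.subtypeL) = opNabla T := by
  classical
  have hEinf : ¬ FiniteDimensional ℝ E := by
    intro h
    have hclosed : IsClosed (E : Set X) := Submodule.closed_of_finiteDimensional E
    have huniv : (E : Set X) = Set.univ := by
      rw [← hclosed.closure_eq]; exact hE.closure_eq
    have hEtop : E = ⊤ := by
      apply Submodule.eq_top_iff'.2
      intro x'
      show x' ∈ (E : Set X)
      rw [huniv]; trivial
    apply hX
    rw [hEtop] at h
    exact (Submodule.topEquiv (R := ℝ) (M := X)).finiteDimensional
  unfold opNabla
  apply le_antisymm
  · refine le_csInf ⟨_, ⟨⊤, notFinDim_top hX, rfl⟩⟩ ?_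
    rintro r ⟨M, hM, rfl⟩
    apply le_of_forall_pos_le_add
    intro ε hε
    obtain ⟨N, hNE, hNinf, hN⟩ := pert T hM hE hε
    set M'' := N.comap E.subtype with hM''def
    have hmap : M''.map E.subtype = N := by
      rw [hM''def, Submodule.map_comap_subtype]
      exact inf_eq_right.2 hNE
    have hM''inf : ¬ FiniteDimensional ℝ M'' := by
      intro h
      apply hNinf
      rw [← hmap]
      haveI := h
      exact Module.Finite.map _ _
    have hcongr : opTau ((T.comp E.subtypeL).comp M''.subtypeL)
        = opTau (T.comp N.subtypeL) := by
      refine opTau_congr _ _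
        ((M''.equivMapOfInjective E.subtype (Submodule.injective_subtype E)).trans
          (LinearEquiv.ofEq _ _ hmap)) (fun v => rfl) (fun v => rfl) hM''inf
    refine le_trans (csInf_le (nablaSet_bddBelow _) ⟨M'', hM''inf, rfl⟩) ?_
    rw [hcongr]
    exact hN
  · refine le_csInf ⟨_, ⟨⊤, notFinDim_top hEinf, rfl⟩⟩ ?_
    rintro r ⟨M, hM, rfl⟩
    have hcongr : opTau ((T.comp E.subtypeL).comp M.subtypeL)
        = opTau (T.comp (M.map E.subtype).subtypeL) := by
      refine opTau_congr _ _
        (M.equivMapOfInjective E.subtype (Submodule.injective_subtype E))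
        (fun v => rfl) (fun v => rfl) hM
    rw [hcongr]
    exact csInf_le (nablaSet_bddBelow _)
      ⟨M.map E.subtype, notFinDim_map _ (Submodule.injective_subtype E) hM, rfl⟩
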